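/- arXiv:1810.02776 — 2 statements merged into one kernel-verified Lean document; each statement's English description precedes it below -/
import Mathlib

section
/- Let G be the directed graph whose vertices are pairs (V, W) of subspaces of F_qⁿ with dim V + dim W = n and edges (V₁,W₁) → (V₂,W₂) iff V₂ ⊆ W₁. For a set of vertices X = {(V_α, W_α) : α ∈ A}, the target closure cl_t(X) = N⁺(N⁻(X)) equals {(V, W) vertex : V ⊆ span(⋃_α V_α)}, and the source closure cl_s(X) = N⁻(N⁺(X)) equals {(V, W) vertex : ⋂_α W_α ⊆ W}. In particular, every target-closed set is the target closure of a single vertex and every source-closed set is the source closure of a single vertex. -/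
/-- Vertices: pairs `(V, W)` of subspaces of `Fⁿ` with `dim V + dim W = n`. -/
def ThetaVtx (F : Type*) [Field F] (n : ℕ) :=
  {p : Submodule F (Fin n → F) × Submodule F (Fin n → F) //
    Module.finrank F p.1 + Module.finrank F p.2 = n}

/-- Edge `(V₁,W₁) → (V₂,W₂)` iff `V₂ ⊆ W₁`. -/
def ThetaE (F : Type*) [Field F] (n : ℕ) (p r : ThetaVtx F n) : Prop :=
  r.val.1 ≤ p.val.2

/-- Common post-neighbours. -/
def Npost {V : Type*} (E : V → V → Prop) (X : Set V) : Set V :=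
  {v | ∀ x ∈ X, E x v}

/-- Common pre-neighbours. -/
def Npre {V : Type*} (E : V → V → Prop) (X : Set V) : Set V :=
  {v | ∀ x ∈ X, E v x}


private lemma exists_compl_dim {F : Type*} [Field F] {n : ℕ}
    (U : Submodule F (Fin n → F)) :
    ∃ W : Submodule F (Fin n → F), Module.finrank F U + Module.finrank F W = n := by
  obtain ⟨W, hW⟩ := U.exists_isCompl
  exact ⟨W, by rw [Submodule.finrank_add_eq_of_isCompl hW, Module.finrank_fin_fun]⟩

private lemma clt_eq {F : Type*} [Field F] {n : ℕ} (X : Set (ThetaVtx F n)) :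
    Npost (ThetaE F n) (Npre (ThetaE F n) X) =
      {p : ThetaVtx F n | p.val.1 ≤ ⨆ x ∈ X, x.val.1} := by
  ext p
  constructor
  · intro hp
    obtain ⟨W, hW⟩ := exists_compl_dim (⨆ x ∈ X, (x : ThetaVtx F n).val.1)
    exact hp ⟨(W, ⨆ x ∈ X, x.val.1), by rw [add_comm]; exact hW⟩
      (fun x hx => le_iSup₂ (f := fun x _ => (x : ThetaVtx F n).val.1) x hx)
  · intro hp r hr
    exact hp.trans (iSup₂_le fun x hx => hr x hx)

private lemma cls_eq {F : Type*} [Field F] {n : ℕ} (X : Set (ThetaVtx F n)) :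
    Npre (ThetaE F n) (Npost (ThetaE F n) X) =
      {p : ThetaVtx F n | (⨅ x ∈ X, x.val.2) ≤ p.val.2} := by
  ext p
  constructor
  · intro hp
    obtain ⟨W, hW⟩ := exists_compl_dim (⨅ x ∈ X, (x : ThetaVtx F n).val.2)
    exact hp ⟨(⨅ x ∈ X, x.val.2, W), hW⟩
      (fun x hx => iInf₂_le (f := fun x _ => (x : ThetaVtx F n).val.2) x hx)
  · intro hp r hr
    exact le_trans (le_iInf₂ fun x hx => hr x hx) hp

/-- In the graph of pairs of subspaces, the target closure of `X` is the set of
vertices whose first component lies in the span of the first components of `X`,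
the source closure is the set of vertices whose second component contains the
intersection of the second components of `X`; consequently every target-closed
(resp. source-closed) set is the target (resp. source) closure of a single
vertex. -/
theorem stmt_17 (q n : ℕ) (hq : 1 < q)
    (F : Type*) [Field F] [Fintype F] (hF : Fintype.card F = q) :
    (∀ X : Set (ThetaVtx F n),
      Npost (ThetaE F n) (Npre (ThetaE F n) X) =
        {p : ThetaVtx F n | p.val.1 ≤ ⨆ x ∈ X, x.val.1} ∧
      Npre (ThetaE F n) (Npost (ThetaE F n) X) =
        {p : ThetaVtx F n | (⨅ x ∈ X, x.val.2) ≤ p.val.2}) ∧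
    (∀ X : Set (ThetaVtx F n),
      Npost (ThetaE F n) (Npre (ThetaE F n) X) = X →
        ∃ v : ThetaVtx F n, X = Npost (ThetaE F n) (Npre (ThetaE F n) ({v} : Set _))) ∧
    (∀ X : Set (ThetaVtx F n),
      Npre (ThetaE F n) (Npost (ThetaE F n) X) = X →
        ∃ v : ThetaVtx F n, X = Npre (ThetaE F n) (Npost (ThetaE F n) ({v} : Set _))) := by
  refine ⟨fun X => ⟨clt_eq X, cls_eq X⟩, ?_, ?_⟩
  · intro X hX
    obtain ⟨W, hW⟩ := exists_compl_dim (⨆ x ∈ X, (x : ThetaVtx F n).val.1)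
    refine ⟨⟨(⨆ x ∈ X, x.val.1, W), hW⟩, (hX.symm.trans (clt_eq X)).trans ?_⟩
    rw [clt_eq]
    exact congrArg (fun S => {p : ThetaVtx F n | p.val.1 ≤ S})
      (iSup_singleton (f := fun x : ThetaVtx F n => x.val.1)
        (b := ⟨(⨆ x ∈ X, x.val.1, W), hW⟩)).symm
  · intro X hX
    obtain ⟨W, hW⟩ := exists_compl_dim (⨅ x ∈ X, (x : ThetaVtx F n).val.2)
    refine ⟨⟨(W, ⨅ x ∈ X, x.val.2), by rw [add_comm]; exact hW⟩,
      (hX.symm.trans (cls_eq X)).trans ?_⟩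
    rw [cls_eq]
    exact congrArg (fun S => {p : ThetaVtx F n | S ≤ p.val.2})
      (iInf_singleton (f := fun x : ThetaVtx F n => x.val.2)
        (b := ⟨(W, ⨅ x ∈ X, x.val.2), by rw [add_comm]; exact hW⟩)).symm
end

section
/- Let G be the directed graph whose vertices are pairs (V, W) of subspaces of F_qⁿ with dim V + dim W = n and edges (V₁,W₁) → (V₂,W₂) iff V₂ ⊆ W₁. For any two vertices x = (V_x, W_x) and y = (V_y, W_y) with dim V_x = dim V_y = k, the set cl_t(x) ∩ cl_s(y) ∩ {vertices (V,W) with dim V = k} is the singleton {(V_x, W_y)}, where cl_t(x) = N⁺(N⁻({x})) and cl_s(y) = N⁻(N⁺({y})). -/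
/-- For vertices `x = (V_x, W_x)` and `y = (V_y, W_y)` with
`dim V_x = dim V_y = k`, the set `cl_t(x) ∩ cl_s(y) ∩ {dim V = k}` is the
singleton `{(V_x, W_y)}`. -/
theorem stmt_18 (q n k : ℕ) (hq : 1 < q)
    (F : Type*) [Field F] [Fintype F] (hF : Fintype.card F = q)
    (x y : ThetaVtx F n)
    (hx : Module.finrank F x.val.1 = k) (hy : Module.finrank F y.val.1 = k) :
    (Npost (ThetaE F n) (Npre (ThetaE F n) ({x} : Set _)) ∩
        Npre (ThetaE F n) (Npost (ThetaE F n) ({y} : Set _)) ∩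
        {v : ThetaVtx F n | Module.finrank F v.val.1 = k}) =
      {v : ThetaVtx F n | v.val = (x.val.1, y.val.2)} ∧
    ∃ v : ThetaVtx F n, v.val = (x.val.1, y.val.2) := by
  have hx2 : Module.finrank F x.val.1 + Module.finrank F x.val.2 = n := x.2
  have hy2 : Module.finrank F y.val.1 + Module.finrank F y.val.2 = n := y.2
  have hv2 : Module.finrank F x.val.1 + Module.finrank F y.val.2 = n := by omega
  constructor
  · ext w
    simp only [Set.mem_inter_iff, Set.mem_setOf_eq, Npost, Npre, ThetaE,
      Set.mem_singleton_iff, forall_eq]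
    constructor
    · rintro ⟨⟨h1, h2⟩, h3⟩
      have hwx : w.val.1 ≤ x.val.1 := by
        have := h1 ⟨(x.val.2, x.val.1), by dsimp only; omega⟩ le_rfl
        exact this
      have hyw : y.val.2 ≤ w.val.2 := by
        have := h2 ⟨(y.val.2, y.val.1), by dsimp only; omega⟩ le_rfl
        exact this
      have e1 : w.val.1 = x.val.1 :=
        Submodule.eq_of_le_of_finrank_le hwx (by omega)
      have e2 : w.val.2 = y.val.2 := by
        have hw2 : Module.finrank F w.val.1 + Module.finrank F w.val.2 = n := w.2
        exact (Submodule.eq_of_le_of_finrank_le hyw (by omega)).symm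
      exact Prod.ext e1 e2
    · intro hw
      refine ⟨⟨fun v hv => ?_, fun v hv => ?_⟩, ?_⟩
      · show w.val.1 ≤ v.val.2
        rw [hw]; exact hv
      · show v.val.1 ≤ w.val.2
        rw [hw]; exact hv
      · rw [hw]; exact hx
  · exact ⟨⟨(x.val.1, y.val.2), hv2⟩, rfl⟩
end
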